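/- Let (M_p) satisfy (M.1) (log-convexity: M_p^2 ≤ M_{p-1} M_{p+1} for p ≥ 1), with M_0 = M_1 = 1, and suppose the quotients m_p = M_p/M_{p-1} satisfy that m_p / p^λ is monotonically increasing for some λ > 0. Then (M_p) satisfies (M.5): there exist s > 0 and c_0 ≥ 1 with ∑_{q=p+1}^∞ m_q^{-s} ≤ c_0 p m_{p+1}^{-s} for all p ≥ 1. -/

import Mathlib

/-- If `M` is log-convex with `M 0 = M 1 = 1` and the quotients `m_p = M_p/M_{p-1}`
are such that `m_p / p^λ` is monotonically increasing for some `λ > 0`, then `M`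
satisfies (M.5): for some `s > 0` and `c0 ≥ 1`,
`∑_{q=p+1}^∞ m_q^{-s} ≤ c0 p m_{p+1}^{-s}` for all `p ≥ 1`. -/
theorem stmt1 (M : ℕ → ℝ) (hpos : ∀ p, 0 < M p) (h0 : M 0 = 1) (h1 : M 1 = 1)
    (hM1 : ∀ p : ℕ, 1 ≤ p → (M p) ^ 2 ≤ M (p - 1) * M (p + 1))
    (hmono : ∃ lam > (0 : ℝ), ∀ p q : ℕ, 1 ≤ p → p ≤ q →
      (M p / M (p - 1)) / (p : ℝ) ^ lam ≤ (M q / M (q - 1)) / (q : ℝ) ^ lam) :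
    ∃ s > (0 : ℝ), ∃ c0 ≥ (1 : ℝ), ∀ p : ℕ, 1 ≤ p →
      (∑' j : ℕ, (M (p + j + 1) / M (p + j)) ^ (-s)) ≤
        c0 * p * (M (p + 1) / M p) ^ (-s) := by
  obtain ⟨lam, hlam, hm⟩ := hmono
  refine ⟨2 / lam, by positivity, 4, by norm_num, fun p hp => ?_⟩
  set s : ℝ := 2 / lam with hs
  have hs0 : 0 < s := by positivity
  have hpR : (0 : ℝ) < p := by exact_mod_cast hp
  set b : ℝ := M (p + 1) / M p with hb
  have hbpos : 0 < b := div_pos (hpos _) (hpos _)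
  set C : ℝ := b ^ (-s) with hC
  have hCpos : 0 < C := Real.rpow_pos_of_pos hbpos _
  -- pointwise bound
  have key : ∀ j : ℕ, (M (p + j + 1) / M (p + j)) ^ (-s) ≤
      C * ((p : ℝ) + 1) ^ 2 * (((p + j + 1 : ℕ) : ℝ) ^ 2)⁻¹ := by
    intro j
    set q : ℕ := p + j + 1 with hq
    have hq1 : 1 ≤ p + 1 := le_add_self
    have hle : p + 1 ≤ q := by omega
    have hmq := hm (p + 1) q hq1 hle
    simp only [Nat.add_sub_cancel] at hmq
    have hq' : (q - 1 : ℕ) = p + j := by omega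
    rw [hq'] at hmq
    have hqR : (0 : ℝ) < q := by positivity
    have hp1R : (0 : ℝ) < (p : ℝ) + 1 := by positivity
    have hqcast : ((q : ℕ) : ℝ) = (p : ℝ) + (j : ℝ) + 1 := by push_cast [hq]; ring
    set t : ℝ := (q : ℝ) / ((p : ℝ) + 1) with ht
    have ht1 : (1 : ℝ) ≤ t := by
      rw [ht, le_div_iff₀ hp1R, one_mul]
      exact_mod_cast hle
    have htpos : 0 < t := lt_of_lt_of_le one_pos ht1
    have hcast : ((p + 1 : ℕ) : ℝ) = (p : ℝ) + 1 := by push_cast; ring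
    rw [hcast] at hmq
    -- from hmq : b / (p+1)^lam ≤ (M q / M (p+j)) / q^lam
    have hplam : (0 : ℝ) < ((p : ℝ) + 1) ^ lam := Real.rpow_pos_of_pos hp1R _
    have hqlam : (0 : ℝ) < (q : ℝ) ^ lam := Real.rpow_pos_of_pos hqR _
    have hdiv : b * t ^ lam ≤ M q / M (p + j) := by
      have htlam : t ^ lam = (q : ℝ) ^ lam / ((p : ℝ) + 1) ^ lam := by
        rw [ht, Real.div_rpow hqR.le hp1R.le]
      rw [htlam]
      rw [div_le_div_iff₀ hplam hqlam] at hmq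
      rw [mul_div_assoc', div_le_iff₀ hplam]
      linarith [hmq]
    have hbt : (0 : ℝ) < b * t ^ lam := by positivity
    have h1 : (M q / M (p + j)) ^ (-s) ≤ (b * t ^ lam) ^ (-s) :=
      Real.rpow_le_rpow_of_nonpos hbt hdiv (by linarith)
    have h2 : (b * t ^ lam) ^ (-s) = C * t ^ (-2 : ℝ) := by
      have hls : lam * (-s) = -2 := by
        field_simp [hs]
        rw [hs, mul_div_cancel₀ (2:ℝ) hlam.ne']
      rw [Real.mul_rpow hbpos.le (Real.rpow_pos_of_pos htpos _).le,
        ← Real.rpow_mul htpos.le, hls]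
    have h3 : t ^ (-2 : ℝ) = ((p : ℝ) + 1) ^ 2 * (((q : ℕ) : ℝ) ^ 2)⁻¹ := by
      rw [Real.rpow_neg htpos.le, show ((2 : ℝ)) = ((2 : ℕ) : ℝ) by norm_num,
        Real.rpow_natCast, ht, div_pow, inv_div]
      ring
    calc (M (p + j + 1) / M (p + j)) ^ (-s) = (M q / M (p + j)) ^ (-s) := by rw [hq]
      _ ≤ (b * t ^ lam) ^ (-s) := h1
      _ = C * t ^ (-2 : ℝ) := h2
      _ = C * (((p : ℝ) + 1) ^ 2 * (((q : ℕ) : ℝ) ^ 2)⁻¹) := by rw [h3]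
      _ = C * ((p : ℝ) + 1) ^ 2 * (((q : ℕ) : ℝ) ^ 2)⁻¹ := by ring
  -- bound partial sums
  have hnonneg : ∀ j : ℕ, 0 ≤ (M (p + j + 1) / M (p + j)) ^ (-s) := fun j =>
    (Real.rpow_pos_of_pos (div_pos (hpos _) (hpos _)) _).le
  apply Real.tsum_le_of_sum_range_le hnonneg
  intro n
  have step1 : ∑ j ∈ Finset.range n, (M (p + j + 1) / M (p + j)) ^ (-s) ≤
      ∑ j ∈ Finset.range n, C * ((p : ℝ) + 1) ^ 2 * (((p + j + 1 : ℕ) : ℝ) ^ 2)⁻¹ :=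
    Finset.sum_le_sum fun j _ => key j
  have step2 : ∑ j ∈ Finset.range n, (((p + j + 1 : ℕ) : ℝ) ^ 2)⁻¹ ≤ (p : ℝ)⁻¹ := by
    have := sum_Ioc_inv_sq_le_sub (α := ℝ) (k := p) (n := p + n) (by omega) (by omega)
    have heq : ∑ i ∈ Finset.Ioc p (p + n), (((i : ℕ) : ℝ) ^ 2)⁻¹ =
        ∑ j ∈ Finset.range n, (((p + j + 1 : ℕ) : ℝ) ^ 2)⁻¹ := by
      rw [← Finset.Ico_add_one_add_one_eq_Ioc, Finset.sum_Ico_eq_sum_range, Nat.add_sub_add_right,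
        Nat.add_sub_cancel_left]
      exact Finset.sum_congr rfl fun j _ => by rw [show p + 1 + j = p + j + 1 by omega]
    rw [heq] at this
    have hnn : (0 : ℝ) ≤ ((p + n : ℕ) : ℝ)⁻¹ := by positivity
    linarith
  calc ∑ j ∈ Finset.range n, (M (p + j + 1) / M (p + j)) ^ (-s)
      ≤ ∑ j ∈ Finset.range n, C * ((p : ℝ) + 1) ^ 2 * (((p + j + 1 : ℕ) : ℝ) ^ 2)⁻¹ := step1
    _ = C * ((p : ℝ) + 1) ^ 2 * ∑ j ∈ Finset.range n, (((p + j + 1 : ℕ) : ℝ) ^ 2)⁻¹ := by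
        rw [Finset.mul_sum]
    _ ≤ C * ((p : ℝ) + 1) ^ 2 * (p : ℝ)⁻¹ := by
        apply mul_le_mul_of_nonneg_left step2 (by positivity)
    _ = C * (((p : ℝ) + 1) ^ 2 * ((p : ℝ))⁻¹) := by ring
    _ ≤ C * (4 * (p : ℝ)) := by
        have hp1 : (1 : ℝ) ≤ (p : ℝ) := by exact_mod_cast hp
        have h4 : ((p : ℝ) + 1) ^ 2 * ((p : ℝ))⁻¹ ≤ 4 * (p : ℝ) := by
          rw [← div_eq_mul_inv, div_le_iff₀ hpR]
          nlinarith [hp1]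
        exact mul_le_mul_of_nonneg_left h4 hCpos.le
    _ = 4 * (p : ℝ) * C := by ring
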